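/- Let d ≥ 1 and let f : ℝ^d → ℝ belong to the Zygmund class Λ_*(ℝ^d). Then there exists a constant M > 0 such that for every x₀ ∈ ℝ^d and every r > 0 there is an affine function P : ℝ^d → ℝ with sup_{x ∈ B(x₀, r)} |f(x) − P(x)| ≤ M·r, where B(x₀, r) is the open ball in ℝ^d. -/

import Mathlib

open Metric

lemma zygmund_oneD (g : ℝ → ℝ) (hg : Continuous g) (K : ℝ)
    (hK : ∀ s t : ℝ, |g (s+t) + g (s-t) - 2 * g s| ≤ K * |t|) :
    ∀ s ∈ Set.Icc (-1:ℝ) 1,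
      |g s - ((g 1 + g (-1))/2 + s * ((g 1 - g (-1))/2))| ≤ K := by
  set L : ℝ → ℝ := fun s => (g 1 + g (-1))/2 + s * ((g 1 - g (-1))/2) with hL
  set E : ℝ → ℝ := fun s => g s - L s with hEdef
  have hKnn : 0 ≤ K := by
    have h := hK 0 1
    have h0 : (0:ℝ) ≤ |g (0+1) + g (0-1) - 2 * g 0| := abs_nonneg _
    rw [abs_one, mul_one] at h
    linarith
  have hEcont : Continuous fun s => |E s| := by
    apply Continuous.abs
    exact hg.sub (by fun_prop)
  obtain ⟨t0, ht0, hmax⟩ := isCompact_Icc.exists_isMaxOn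
    (Set.nonempty_Icc.2 (by norm_num : (-1:ℝ) ≤ 1)) hEcont.continuousOn
  have hmax' : ∀ s ∈ Set.Icc (-1:ℝ) 1, |E s| ≤ |E t0| := fun s hs => hmax hs
  have key : |E t0| ≤ K := by
    obtain ⟨ht0l, ht0r⟩ := ht0
    rcases le_or_gt 0 t0 with hpos | hneg
    · -- use h = 1 - t0 : t0+h = 1, t0-h = 2t0-1
      have h2 := hK t0 (1 - t0)
      have e1 : t0 + (1 - t0) = 1 := by ring
      have e2 : t0 - (1 - t0) = 2*t0 - 1 := by ring
      rw [e1, e2, abs_of_nonneg (by linarith : (0:ℝ) ≤ 1 - t0)] at h2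
      have e3 : g 1 + g (2*t0-1) - 2*g t0 = E (2*t0-1) - 2*E t0 := by
        simp only [hEdef, hL]; ring
      rw [e3] at h2
      have hmem : (2*t0 - 1) ∈ Set.Icc (-1:ℝ) 1 := by constructor <;> linarith
      have h3 := hmax' _ hmem
      have h4 : 2 * |E t0| - |E (2*t0-1)| ≤ |E (2*t0-1) - 2*E t0| := by
        have ha : 2 * |E t0| = |2*E t0| := by rw [abs_mul, abs_two]
        have hb := abs_sub_abs_le_abs_sub (2*E t0) (E (2*t0-1))
        have hc := abs_sub_comm (2*E t0) (E (2*t0-1))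
        linarith
      have h5 : K * (1 - t0) ≤ K := by nlinarith
      linarith
    · have h2 := hK t0 (1 + t0)
      have e1 : t0 + (1 + t0) = 2*t0 + 1 := by ring
      have e2 : t0 - (1 + t0) = -1 := by ring
      rw [e1, e2, abs_of_nonneg (by linarith : (0:ℝ) ≤ 1 + t0)] at h2
      have e3 : g (2*t0+1) + g (-1) - 2*g t0 = E (2*t0+1) - 2*E t0 := by
        simp only [hEdef, hL]; ring
      rw [e3] at h2
      have hmem : (2*t0 + 1) ∈ Set.Icc (-1:ℝ) 1 := by constructor <;> linarith
      have h3 := hmax' _ hmem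
      have h4 : 2 * |E t0| - |E (2*t0+1)| ≤ |E (2*t0+1) - 2*E t0| := by
        have ha : 2 * |E t0| = |2*E t0| := by rw [abs_mul, abs_two]
        have hb := abs_sub_abs_le_abs_sub (2*E t0) (E (2*t0+1))
        have hc := abs_sub_comm (2*E t0) (E (2*t0+1))
        linarith
      have h5 : K * (1 + t0) ≤ K := by nlinarith
      linarith
  intro s hs
  exact (hmax' s hs).trans key

lemma zygmund_rect {d : ℕ} (f : EuclideanSpace ℝ (Fin d) → ℝ) (C' : ℝ)
    (hC'nn : 0 ≤ C')
    (zyg' : ∀ x h : EuclideanSpace ℝ (Fin d),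
      |f (x + h) + f (x - h) - 2 * f x| ≤ C' * ‖h‖)
    (z v w : EuclideanSpace ℝ (Fin d)) :
    |f (z+v+w) - f (z+v-w) - f (z+w) + f (z-w)| ≤ C' * (‖v‖ + 2*‖w‖) := by
  have hA := zyg' (z + (2⁻¹:ℝ) • v) ((2⁻¹:ℝ) • v + w)
  have hB := zyg' (z + (2⁻¹:ℝ) • v) ((2⁻¹:ℝ) • v - w)
  have e1 : z + (2⁻¹:ℝ)•v + ((2⁻¹:ℝ)•v + w) = z + v + w := by module
  have e2 : z + (2⁻¹:ℝ)•v - ((2⁻¹:ℝ)•v + w) = z - w := by module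
  have e3 : z + (2⁻¹:ℝ)•v + ((2⁻¹:ℝ)•v - w) = z + v - w := by module
  have e4 : z + (2⁻¹:ℝ)•v - ((2⁻¹:ℝ)•v - w) = z + w := by module
  rw [e1, e2] at hA
  rw [e3, e4] at hB
  have n1 : ‖(2⁻¹:ℝ)•v + w‖ ≤ 2⁻¹*‖v‖ + ‖w‖ := by
    refine (norm_add_le _ _).trans ?_
    rw [norm_smul]
    norm_num [Real.norm_eq_abs]
  have n2 : ‖(2⁻¹:ℝ)•v - w‖ ≤ 2⁻¹*‖v‖ + ‖w‖ := by
    refine (norm_sub_le _ _).trans ?_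
    rw [norm_smul]
    norm_num [Real.norm_eq_abs]
  have heq : f (z+v+w) - f (z+v-w) - f (z+w) + f (z-w)
      = (f (z+v+w) + f (z-w) - 2 * f (z + (2⁻¹:ℝ)•v))
        - (f (z+v-w) + f (z+w) - 2 * f (z + (2⁻¹:ℝ)•v)) := by ring
  rw [heq]
  have tA : |f (z+v+w) + f (z-w) - 2 * f (z + (2⁻¹:ℝ)•v)| ≤ C' * (2⁻¹*‖v‖ + ‖w‖) :=
    hA.trans (mul_le_mul_of_nonneg_left n1 hC'nn)
  have tB : |f (z+v-w) + f (z+w) - 2 * f (z + (2⁻¹:ℝ)•v)| ≤ C' * (2⁻¹*‖v‖ + ‖w‖) :=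
    hB.trans (mul_le_mul_of_nonneg_left n2 hC'nn)
  calc |_ - _| ≤ |f (z+v+w) + f (z-w) - 2 * f (z + (2⁻¹:ℝ)•v)|
        + |f (z+v-w) + f (z+w) - 2 * f (z + (2⁻¹:ℝ)•v)| := abs_sub _ _
    _ ≤ C' * (‖v‖ + 2*‖w‖) := by nlinarith [norm_nonneg v, norm_nonneg w]

lemma zygmund_step {d : ℕ} (f : EuclideanSpace ℝ (Fin d) → ℝ)
    (hf_cont : Continuous f) (C' r D : ℝ) (hC'nn : 0 ≤ C') (hr : 0 < r) (hD : 0 ≤ D)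
    (zyg' : ∀ x h : EuclideanSpace ℝ (Fin d),
      |f (x + h) + f (x - h) - 2 * f x| ≤ C' * ‖h‖)
    (x0 u w : EuclideanSpace ℝ (Fin d)) (hw : ‖w‖ = r) (hu : ‖u‖ ≤ D * r)
    (c : ℝ) (hc : |c| ≤ r) :
    |f (x0 + u + (c/r) • w) - f (x0 + u) - c * ((f (x0 + w) - f (x0 - w))/(2*r))|
      ≤ 2*(C'*r) + C' * (D*r + 2*r) / 2 := by
  set g : ℝ → ℝ := fun s => f (x0 + u + s • w) with hg
  have hgc : Continuous g := by rw [hg]; fun_prop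
  have hgK : ∀ s t : ℝ, |g (s+t) + g (s-t) - 2 * g s| ≤ (C'*r) * |t| := by
    intro s t
    have h1 : x0 + u + (s+t) • w = (x0 + u + s • w) + t • w := by module
    have h2 : x0 + u + (s-t) • w = (x0 + u + s • w) - t • w := by module
    have h3 := zyg' (x0 + u + s • w) (t • w)
    rw [← h1, ← h2] at h3
    simp only [hg]
    refine h3.trans ?_
    rw [norm_smul, hw, Real.norm_eq_abs]
    ring_nf
    exact le_refl _
  have hIcc : c / r ∈ Set.Icc (-1:ℝ) 1 := by
    rw [Set.mem_Icc]
    constructor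
    · rw [neg_le, ← neg_div]
      refine (div_le_one hr).mpr ?_
      have := neg_abs_le c
      linarith
    · refine (div_le_one hr).mpr ?_
      have := le_abs_self c
      linarith
  have B1 := zygmund_oneD g hgc (C'*r) hgK (c / r) hIcc
  have B2 := zygmund_oneD g hgc (C'*r) hgK 0 (by norm_num)
  have hg0 : g 0 = f (x0 + u) := by simp only [hg]; simp
  have hg1 : g 1 = f (x0 + u + w) := by simp only [hg]; simp
  have hgm1 : g (-1) = f (x0 + u - w) := by
    simp only [hg]
    norm_num [sub_eq_add_neg]
  have hR := zygmund_rect f C' hC'nn zyg' x0 u w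
  have hR2 : |f (x0 + u + w) - f (x0 + u - w) - f (x0 + w) + f (x0 - w)|
      ≤ C' * (D*r + 2*r) := by
    refine hR.trans (mul_le_mul_of_nonneg_left ?_ hC'nn)
    rw [hw]
    linarith
  have hmid : (c / r) * ((g 1 - g (-1))/2) - c * ((f (x0 + w) - f (x0 - w))/(2*r))
      = (c / (2*r)) * (f (x0 + u + w) - f (x0 + u - w) - f (x0 + w) + f (x0 - w)) := by
    rw [hg1, hgm1]
    field_simp
    ring
  have hfrac : |c / (2*r)| ≤ 1/2 := by
    rw [abs_div, abs_of_pos (by linarith : (0:ℝ) < 2*r),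
      div_le_iff₀ (by linarith : (0:ℝ) < 2*r)]
    linarith
  have hthird : |(c / r) * ((g 1 - g (-1))/2) - c * ((f (x0 + w) - f (x0 - w))/(2*r))|
      ≤ C' * (D*r + 2*r) / 2 := by
    rw [hmid, abs_mul]
    calc |c / (2*r)| * |f (x0 + u + w) - f (x0 + u - w) - f (x0 + w) + f (x0 - w)|
        ≤ (1/2) * (C' * (D*r + 2*r)) :=
          mul_le_mul hfrac hR2 (abs_nonneg _) (by norm_num)
      _ = C' * (D*r + 2*r) / 2 := by ring
  have hsplit : f (x0 + u + (c/r) • w) - f (x0 + u)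
        - c * ((f (x0 + w) - f (x0 - w))/(2*r))
      = (g (c / r) - ((g 1 + g (-1))/2 + (c / r) * ((g 1 - g (-1))/2)))
        - (g 0 - ((g 1 + g (-1))/2 + 0 * ((g 1 - g (-1))/2)))
        + ((c / r) * ((g 1 - g (-1))/2) - c * ((f (x0 + w) - f (x0 - w))/(2*r))) := by
    have hgs : g (c / r) = f (x0 + u + (c/r) • w) := by simp only [hg]
    rw [hgs, hg0]
    ring
  rw [hsplit]
  calc _ ≤ |(g (c / r) - ((g 1 + g (-1))/2 + (c / r) * ((g 1 - g (-1))/2)))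
        - (g 0 - ((g 1 + g (-1))/2 + 0 * ((g 1 - g (-1))/2)))|
        + |(c / r) * ((g 1 - g (-1))/2) - c * ((f (x0 + w) - f (x0 - w))/(2*r))| :=
      abs_add_le _ _
    _ ≤ 2*(C'*r) + C' * (D*r + 2*r) / 2 := by
      have habs2 := abs_sub
        (g (c / r) - ((g 1 + g (-1))/2 + (c / r) * ((g 1 - g (-1))/2)))
        (g 0 - ((g 1 + g (-1))/2 + 0 * ((g 1 - g (-1))/2)))
      linarith [B1, B2, hthird]


/-- A Zygmund function `f : ℝ^d → ℝ` admits uniform affine approximations: there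
is `M > 0` such that for every ball `B(x₀, r)` some affine function
`P(x) = ⟨a, x⟩ + b` satisfies `|f x - P x| ≤ M·r` on `B(x₀, r)`. -/
theorem zygmund_affine_approximation
    (d : ℕ) (hd : 1 ≤ d)
    (f : EuclideanSpace ℝ (Fin d) → ℝ)
    (hf_bdd : ∃ B : ℝ, ∀ x, |f x| ≤ B)
    (hf_cont : Continuous f)
    (hf_zyg : ∃ C : ℝ, ∀ x h : EuclideanSpace ℝ (Fin d), h ≠ 0 →
      |f (x + h) + f (x - h) - 2 * f x| ≤ C * ‖h‖) :
    ∃ M : ℝ, 0 < M ∧ ∀ (x₀ : EuclideanSpace ℝ (Fin d)) (r : ℝ), 0 < r →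
      ∃ (a : EuclideanSpace ℝ (Fin d)) (b : ℝ),
        ∀ x ∈ ball x₀ r, |f x - ((inner ℝ a x : ℝ) + b)| ≤ M * r := by
  obtain ⟨C, hC⟩ := hf_zyg
  set C' : ℝ := |C| with hC'
  have hC'nn : 0 ≤ C' := abs_nonneg C
  have zyg' : ∀ x h : EuclideanSpace ℝ (Fin d),
      |f (x + h) + f (x - h) - 2 * f x| ≤ C' * ‖h‖ := by
    intro x h
    rcases eq_or_ne h 0 with rfl | hne
    · have e0 : f (x + 0) + f (x - 0) - 2 * f x = 0 := by
        rw [add_zero, sub_zero]; ring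
      rw [e0, abs_zero, norm_zero, mul_zero]
    · exact (hC x h hne).trans
        (mul_le_mul_of_nonneg_right (le_abs_self C) (norm_nonneg h))
  have hd1 : (1:ℝ) ≤ (d:ℝ) := by exact_mod_cast hd
  have hdpos : (0:ℝ) < (d:ℝ) := by linarith
  refine ⟨(d:ℝ)*((d:ℝ)+6)*(C'+1),
    mul_pos (mul_pos hdpos (by linarith)) (by linarith), ?_⟩
  intro x0 r hr
  set e : Fin d → EuclideanSpace ℝ (Fin d) := fun i => EuclideanSpace.single i 1 with he
  set A : Fin d → ℝ := fun i => (f (x0 + r • e i) - f (x0 - r • e i)) / (2*r) with hA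
  set a : EuclideanSpace ℝ (Fin d) := (WithLp.equiv 2 (Fin d → ℝ)).symm A with ha
  refine ⟨a, f x0 - (inner ℝ a x0 : ℝ), ?_⟩
  intro x hx
  set h : EuclideanSpace ℝ (Fin d) := x - x0 with hh
  have hnorm : ‖h‖ < r := by
    rw [hh, ← dist_eq_norm]
    exact mem_ball.mp hx
  have hcoord : ∀ i : Fin d, |h i| ≤ r := by
    intro i
    have h1 := abs_real_inner_le_norm (EuclideanSpace.single i (1:ℝ)) h
    rw [EuclideanSpace.inner_single_left, EuclideanSpace.norm_single] at h1
    simp only [norm_one, one_mul, RCLike.star_def, map_one] at h1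
    exact h1.trans hnorm.le
  have hainner : ∀ y : EuclideanSpace ℝ (Fin d), (inner ℝ a y : ℝ) = ∑ i, A i * y i := by
    intro y
    rw [ha]
    simp [PiLp.inner_apply, RCLike.inner_apply, mul_comm]
  set v : ℕ → EuclideanSpace ℝ (Fin d) :=
    fun j => ∑ i ∈ Finset.univ.filter (fun i : Fin d => (i:ℕ) < j), h i • e i with hv
  have hv0 : v 0 = 0 := by simp [hv]
  have hvd : v d = h := by
    simp only [hv]
    rw [Finset.filter_true_of_mem (fun (i : Fin d) _ => i.isLt)]
    have := (EuclideanSpace.basisFun (Fin d) ℝ).sum_repr h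
    simpa [he] using this
  have hvnorm : ∀ j, ‖v j‖ ≤ (d:ℝ) * r := by
    intro j
    refine (norm_sum_le _ _).trans ?_
    have hb : ∀ i ∈ Finset.univ.filter (fun i : Fin d => (i:ℕ) < j), ‖h i • e i‖ ≤ r := by
      intro i _
      rw [norm_smul, he, EuclideanSpace.norm_single, norm_one, mul_one, Real.norm_eq_abs]
      exact hcoord i
    refine (Finset.sum_le_sum hb).trans ?_
    rw [Finset.sum_const, nsmul_eq_mul]
    have hcard : ((Finset.univ.filter (fun i : Fin d => (i:ℕ) < j)).card : ℝ) ≤ (d:ℝ) := by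
      have h1 := Finset.card_filter_le (Finset.univ : Finset (Fin d))
        (fun i : Fin d => (i:ℕ) < j)
      have h2 : (Finset.univ : Finset (Fin d)).card = d :=
        Finset.card_univ.trans (Fintype.card_fin d)
      exact_mod_cast h2 ▸ h1
    exact mul_le_mul_of_nonneg_right hcard hr.le
  have hstep : ∀ (j : ℕ) (hj : j < d), v (j+1) = v j + h ⟨j, hj⟩ • e ⟨j, hj⟩ := by
    intro j hj
    simp only [hv]
    have hset : Finset.univ.filter (fun i : Fin d => (i:ℕ) < j+1)
        = insert (⟨j, hj⟩ : Fin d) (Finset.univ.filter (fun i : Fin d => (i:ℕ) < j)) := by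
      ext i
      simp only [Finset.mem_filter, Finset.mem_univ, true_and, Finset.mem_insert]
      constructor
      · intro hi
        rcases Nat.lt_succ_iff_lt_or_eq.mp hi with h1 | h1
        · exact Or.inr (by simpa using h1)
        · exact Or.inl (Fin.ext h1)
      · rintro (rfl | hi)
        · exact Nat.lt_succ_self j
        · exact Nat.lt_succ_of_lt hi
    rw [hset, Finset.sum_insert (by simp), add_comm]
  have step_bound : ∀ (j : ℕ) (hj : j < d),
      |f (x0 + v (j+1)) - f (x0 + v j) - A ⟨j, hj⟩ * h ⟨j, hj⟩|
        ≤ 2*(C'*r) + C' * ((d:ℝ)*r + 2*r) / 2 := by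
    intro j hj
    have hw : ‖r • e ⟨j, hj⟩‖ = r := by
      rw [he, norm_smul, EuclideanSpace.norm_single, norm_one, mul_one,
        Real.norm_eq_abs, abs_of_pos hr]
    have key := zygmund_step f hf_cont C' r (d:ℝ) hC'nn hr (by linarith)
      zyg' x0 (v j) (r • e ⟨j, hj⟩) hw (hvnorm j) (h ⟨j, hj⟩) (hcoord ⟨j, hj⟩)
    have harg : x0 + v j + (h ⟨j, hj⟩ / r) • (r • e ⟨j, hj⟩) = x0 + v (j+1) := by
      rw [hstep j hj, smul_smul, div_mul_cancel₀ _ hr.ne', add_assoc]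
    rw [harg] at key
    have hAi : A ⟨j, hj⟩ = (f (x0 + r • e ⟨j, hj⟩) - f (x0 - r • e ⟨j, hj⟩)) / (2*r) := by
      rw [hA]
    rw [hAi, mul_comm]
    exact key
  have htel : f x - f x0 = ∑ j ∈ Finset.range d, (f (x0 + v (j+1)) - f (x0 + v j)) := by
    rw [Finset.sum_range_sub (fun j => f (x0 + v j)) d]
    rw [hvd, hv0]
    have hx0h : x0 + h = x := by rw [hh]; abel
    rw [hx0h, add_zero]
  set G : ℕ → ℝ := fun j => if hj : j < d then A ⟨j, hj⟩ * h ⟨j, hj⟩ else 0 with hG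
  have hGsum : ∑ i : Fin d, A i * h i = ∑ j ∈ Finset.range d, G j := by
    rw [← Fin.sum_univ_eq_sum_range G d]
    refine Finset.sum_congr rfl fun i _ => ?_
    simp only [hG]
    simp [i.isLt]
  have hinner : (inner ℝ a x : ℝ) - (inner ℝ a x0 : ℝ) = ∑ i : Fin d, A i * h i := by
    rw [hainner x, hainner x0, ← Finset.sum_sub_distrib]
    refine Finset.sum_congr rfl fun i _ => ?_
    have hxi : h i = x i - x0 i := rfl
    rw [hxi]
    ring
  have hgoal : f x - ((inner ℝ a x : ℝ) + (f x0 - (inner ℝ a x0 : ℝ)))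
      = ∑ j ∈ Finset.range d, (f (x0 + v (j+1)) - f (x0 + v j) - G j) := by
    rw [Finset.sum_sub_distrib, ← htel, ← hGsum, ← hinner]
    ring
  rw [hgoal]
  have hbound : |∑ j ∈ Finset.range d, (f (x0 + v (j+1)) - f (x0 + v j) - G j)|
      ≤ (d:ℝ) * (2*(C'*r) + C' * ((d:ℝ)*r + 2*r) / 2) := by
    refine (Finset.abs_sum_le_sum_abs _ _).trans ?_
    have hb : ∀ j ∈ Finset.range d, |f (x0 + v (j+1)) - f (x0 + v j) - G j|
        ≤ 2*(C'*r) + C' * ((d:ℝ)*r + 2*r) / 2 := by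
      intro j hj
      have hjd : j < d := Finset.mem_range.mp hj
      have hs := step_bound j hjd
      simp only [hG]
      simpa [hjd] using hs
    refine (Finset.sum_le_sum hb).trans ?_
    rw [Finset.sum_const, Finset.card_range, nsmul_eq_mul]
  refine hbound.trans ?_
  have h0 : (0:ℝ) ≤ (d:ℝ)*((d:ℝ)+6)*r*(C'/2+1) := by positivity
  nlinarith [h0]
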